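/- For a nonincreasing nonnegative sequence (μ_n) and 0 < α < 1, the sum Σ_{n≥1} σ_n / n^{2-α} is finite if and only if Σ_{n≥1} μ_{n-1} / n^{1-α} is finite; moreover Σ_{n≥1} μ_{n-1}/n^{1-α} ≤ Σ_{n≥1} σ_n/n^{2-α} ≤ C Σ_{n≥1} μ_{n-1}/n^{1-α} for a constant C depending only on α. -/
import Mathlib


open Filter Topology

private lemma tele {α : ℝ} (hα1 : α < 1) {x : ℝ} (hx : 0 < x) :
    (1 - α) * (x + 1) ^ (α - 2) ≤ x ^ (α - 1) - (x + 1) ^ (α - 1) := by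
  obtain ⟨c, hc, hceq⟩ := exists_hasDerivAt_eq_slope (fun t => t ^ (α - 1))
      (fun t => (α - 1) * t ^ (α - 1 - 1)) (by linarith : x < x + 1)
      (fun t ht => (Real.continuousAt_rpow_const t (α - 1)
        (Or.inl (by nlinarith [ht.1] : t ≠ 0))).continuousWithinAt)
      (fun t ht => Real.hasDerivAt_rpow_const (Or.inl (by nlinarith [ht.1] : t ≠ 0)))
  have hc0 : 0 < c := lt_trans hx hc.1
  have hcx : c ≤ x + 1 := le_of_lt hc.2
  simp only [add_sub_cancel_left, div_one] at hceq
  have h1 : x ^ (α - 1) - (x + 1) ^ (α - 1) = (1 - α) * c ^ (α - 1 - 1) := by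
    have := hceq
    nlinarith [this]
  rw [h1]
  have : (x + 1) ^ (α - 2) ≤ c ^ (α - 1 - 1) := by
    rw [show (α - 1 - 1 : ℝ) = α - 2 by ring] at *
    exact Real.rpow_le_rpow_of_nonpos hc0 hcx (by linarith)
  nlinarith [this, sub_pos.mpr hα1]

private lemma tail_bound {α : ℝ} (hα1 : α < 1) (i N : ℕ) :
    ∑ n ∈ Finset.Ico i N, ((n : ℝ) + 1) ^ (α - 2) ≤
      (1 + 1 / (1 - α)) * ((i : ℝ) + 1) ^ (α - 1) := by
  have hs : (0:ℝ) < 1 - α := by linarith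
  have hi1 : (0:ℝ) < (i : ℝ) + 1 := by positivity
  have hrpos : (0:ℝ) ≤ ((i : ℝ) + 1) ^ (α - 1) := Real.rpow_nonneg hi1.le _
  rcases le_or_gt N i with h | h
  · rw [Finset.Ico_eq_empty (by omega)]
    simp only [Finset.sum_empty]
    positivity
  · rw [Finset.sum_eq_sum_Ico_succ_bot h]
    have htail : ∑ n ∈ Finset.Ico (i + 1) N, ((n : ℝ) + 1) ^ (α - 2) ≤
        (1 / (1 - α)) * ((i : ℝ) + 1) ^ (α - 1) := by
      have hle : ∑ n ∈ Finset.Ico (i + 1) N, ((n : ℝ) + 1) ^ (α - 2) ≤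
          ∑ n ∈ Finset.Ico (i + 1) N,
            (1 / (1 - α)) * ((n : ℝ) ^ (α - 1) - ((n : ℝ) + 1) ^ (α - 1)) := by
        apply Finset.sum_le_sum
        intro n hn
        have hn1 : (0:ℝ) < (n : ℝ) := by
          have := (Finset.mem_Ico.mp hn).1
          have : 1 ≤ n := by omega
          exact_mod_cast this
        have h := tele hα1 hn1
        rw [one_div, inv_mul_eq_div, le_div_iff₀ hs]
        nlinarith [h]
      refine hle.trans ?_
      rw [← Finset.mul_sum]
      have hfn : ∀ n : ℕ, ((n : ℝ) + 1) ^ (α - 1) = (((n + 1 : ℕ)) : ℝ) ^ (α - 1) := by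
        intro n; push_cast; ring_nf
      have htel : ∑ n ∈ Finset.Ico (i + 1) N,
          ((n : ℝ) ^ (α - 1) - ((n : ℝ) + 1) ^ (α - 1)) ≤ ((i : ℝ) + 1) ^ (α - 1) := by
        rcases le_or_gt (i + 1) N with hN | hN
        · have : ∑ n ∈ Finset.Ico (i + 1) N,
              ((n : ℝ) ^ (α - 1) - ((n : ℝ) + 1) ^ (α - 1)) =
              (((i + 1 : ℕ)) : ℝ) ^ (α - 1) - ((N : ℝ)) ^ (α - 1) := by
            have := Finset.sum_Ico_eq_sub
              (fun n : ℕ => ((n : ℝ)) ^ (α - 1) - (((n + 1 : ℕ)) : ℝ) ^ (α - 1)) hN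
            simp only [hfn]
            rw [this, Finset.sum_range_sub' (fun n : ℕ => ((n : ℝ)) ^ (α - 1)),
              Finset.sum_range_sub' (fun n : ℕ => ((n : ℝ)) ^ (α - 1))]
            ring
          rw [this]
          have hNpos : (0:ℝ) ≤ (N : ℝ) ^ (α - 1) := Real.rpow_nonneg (Nat.cast_nonneg N) _
          push_cast
          linarith
        · rw [Finset.Ico_eq_empty (by omega)]
          simp [hrpos]
      exact mul_le_mul_of_nonneg_left htel (by positivity)
    have hfirst : ((i : ℝ) + 1) ^ (α - 2) ≤ ((i : ℝ) + 1) ^ (α - 1) :=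
      Real.rpow_le_rpow_of_exponent_le (by simp) (by linarith)
    linarith [htail, hfirst]

theorem stmt1 (α : ℝ) (hα0 : 0 < α) (hα1 : α < 1) (μ : ℕ → ℝ)
    (hmono : Antitone μ) (hpos : ∀ n, 0 ≤ μ n) :
    ∃ C : ℝ, 0 < C ∧
      ((Summable (fun n : ℕ =>
          (∑ i ∈ Finset.range (n + 1), μ i) / ((n : ℝ) + 1) ^ (2 - α)) ↔
        Summable (fun n : ℕ => μ n / ((n : ℝ) + 1) ^ (1 - α))) ∧
      (∑' n : ℕ, μ n / ((n : ℝ) + 1) ^ (1 - α)) ≤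
        (∑' n : ℕ, (∑ i ∈ Finset.range (n + 1), μ i) / ((n : ℝ) + 1) ^ (2 - α)) ∧
      (∑' n : ℕ, (∑ i ∈ Finset.range (n + 1), μ i) / ((n : ℝ) + 1) ^ (2 - α)) ≤
        C * ∑' n : ℕ, μ n / ((n : ℝ) + 1) ^ (1 - α)) := by
  set a : ℕ → ℝ := fun n => (∑ i ∈ Finset.range (n + 1), μ i) / ((n : ℝ) + 1) ^ (2 - α)
    with ha_def
  set b : ℕ → ℝ := fun n => μ n / ((n : ℝ) + 1) ^ (1 - α) with hb_def
  have ht : ∀ n : ℕ, (0:ℝ) < (n : ℝ) + 1 := fun n => by positivity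
  have hdiv2 : ∀ n : ℕ, ∀ x : ℝ, x / ((n : ℝ) + 1) ^ (2 - α) = x * ((n : ℝ) + 1) ^ (α - 2) := by
    intro n x
    rw [show (α - 2 : ℝ) = -(2 - α) by ring, Real.rpow_neg (ht n).le, div_eq_mul_inv]
  have hdiv1 : ∀ n : ℕ, ∀ x : ℝ, x / ((n : ℝ) + 1) ^ (1 - α) = x * ((n : ℝ) + 1) ^ (α - 1) := by
    intro n x
    rw [show (α - 1 : ℝ) = -(1 - α) by ring, Real.rpow_neg (ht n).le, div_eq_mul_inv]
  have ha_nonneg : ∀ n, 0 ≤ a n := by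
    intro n
    exact div_nonneg (Finset.sum_nonneg fun i _ => hpos i) (Real.rpow_nonneg (ht n).le _)
  have hb_nonneg : ∀ n, 0 ≤ b n := by
    intro n
    exact div_nonneg (hpos n) (Real.rpow_nonneg (ht n).le _)
  -- pointwise b ≤ a
  have hba : ∀ n, b n ≤ a n := by
    intro n
    have hσ : ((n : ℝ) + 1) * μ n ≤ ∑ i ∈ Finset.range (n + 1), μ i := by
      have : ∑ i ∈ Finset.range (n + 1), μ n ≤ ∑ i ∈ Finset.range (n + 1), μ i :=
        Finset.sum_le_sum fun i hi => hmono (by exact Nat.le_of_lt_succ (Finset.mem_range.mp hi))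
      simpa [Finset.sum_const, mul_comm] using this
    simp only [ha_def, hb_def]
    rw [hdiv1, hdiv2]
    calc μ n * ((n : ℝ) + 1) ^ (α - 1)
        = (((n : ℝ) + 1) * μ n) * ((n : ℝ) + 1) ^ (α - 2) := by
          rw [show (α - 1 : ℝ) = 1 + (α - 2) by ring, Real.rpow_add (ht n),
            Real.rpow_one]
          ring
      _ ≤ (∑ i ∈ Finset.range (n + 1), μ i) * ((n : ℝ) + 1) ^ (α - 2) := by
          apply mul_le_mul_of_nonneg_right hσ (Real.rpow_nonneg (ht n).le _)
  set C : ℝ := 1 + 1 / (1 - α) with hC_def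
  have hCpos : 0 < C := by
    have : (0:ℝ) < 1 - α := by linarith
    positivity
  -- key partial sum bound
  have hkey : ∀ N : ℕ, ∑ n ∈ Finset.range N, a n ≤ C * ∑ n ∈ Finset.range N, b n := by
    intro N
    have hswap : ∑ n ∈ Finset.range N, a n =
        ∑ i ∈ Finset.range N, μ i * ∑ n ∈ Finset.Ico i N, ((n : ℝ) + 1) ^ (α - 2) := by
      calc ∑ n ∈ Finset.range N, a n
          = ∑ n ∈ Finset.range N, ∑ i ∈ Finset.range (n + 1),
              μ i * ((n : ℝ) + 1) ^ (α - 2) := by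
            refine Finset.sum_congr rfl fun n _ => ?_
            simp only [ha_def]
            rw [hdiv2, Finset.sum_mul]
        _ = ∑ i ∈ Finset.range N, ∑ n ∈ Finset.Ico i N,
              μ i * ((n : ℝ) + 1) ^ (α - 2) := by
            have h := Finset.sum_Ico_Ico_comm 0 N
              (fun i n => μ i * ((n : ℝ) + 1) ^ (α - 2))
            simp only [Finset.range_eq_Ico]
            exact h.symm
        _ = ∑ i ∈ Finset.range N, μ i * ∑ n ∈ Finset.Ico i N, ((n : ℝ) + 1) ^ (α - 2) :=
            Finset.sum_congr rfl fun i _ => (Finset.mul_sum _ _ _).symm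
    rw [hswap, Finset.mul_sum]
    apply Finset.sum_le_sum
    intro i _
    calc μ i * ∑ n ∈ Finset.Ico i N, ((n : ℝ) + 1) ^ (α - 2)
        ≤ μ i * (C * ((i : ℝ) + 1) ^ (α - 1)) :=
          mul_le_mul_of_nonneg_left (tail_bound hα1 i N) (hpos i)
      _ = C * b i := by simp only [hb_def]; rw [hdiv1]; ring
  by_cases hb : Summable b
  · have ha : Summable a := by
      apply summable_of_sum_range_le ha_nonneg (c := C * ∑' n, b n)
      intro N
      refine (hkey N).trans ?_
      have : ∑ n ∈ Finset.range N, b n ≤ ∑' n, b n :=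
        Summable.sum_le_tsum _ (fun n _ => hb_nonneg n) hb
      nlinarith [this]
    refine ⟨C, hCpos, ⟨fun _ => hb, fun _ => ha⟩, ?_, ?_⟩
    · exact Summable.tsum_le_tsum hba hb ha
    · apply Summable.tsum_le_of_sum_range_le ha
      intro N
      refine (hkey N).trans ?_
      have : ∑ n ∈ Finset.range N, b n ≤ ∑' n, b n :=
        Summable.sum_le_tsum _ (fun n _ => hb_nonneg n) hb
      nlinarith [this]
  · have ha : ¬ Summable a := fun ha => hb (ha.of_nonneg_of_le hb_nonneg hba)
    refine ⟨C, hCpos, ⟨fun h => absurd h ha, fun h => absurd h hb⟩, ?_, ?_⟩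
    · rw [tsum_eq_zero_of_not_summable ha, tsum_eq_zero_of_not_summable hb]
    · rw [tsum_eq_zero_of_not_summable ha, tsum_eq_zero_of_not_summable hb, mul_zero]
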